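/- Let ν be a valuation on K[x] and let φ ∈ KP(ν) be an MLV key polynomial for ν of minimal degree, i.e. deg φ = deg(ν). Then ε(φ) ≥ ε(f) for every non-constant f ∈ K[x]. -/

import Mathlib

open Polynomial

namespace KeyPolPaper

variable {K : Type*} [Field K] {Λ : Type*} [AddCommGroup Λ] [LinearOrder Λ] [IsOrderedAddMonoid Λ]

/-- A valuation on `F[X]` with values in `Λ ∪ {∞}`: multiplicative, satisfies the
ultrametric inequality, and is finite on nonzero constants. -/
def IsValuation {F : Type*} [Field F] (w : F[X] → WithTop Λ) : Prop :=
  w 0 = ⊤ ∧ (∀ f g : F[X], w (f * g) = w f + w g) ∧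
    (∀ f g : F[X], min (w f) (w g) ≤ w (f + g)) ∧
    ∀ a : F, a ≠ 0 → w (C a) ≠ ⊤

/-- `μ ≤ ν` for valuations on `K[X]`. -/
def ValLE (μ ν : K[X] → WithTop Λ) : Prop := ∀ f : K[X], μ f ≤ ν f

/-- `μ < ν` for valuations on `K[X]`. -/
def ValLT (μ ν : K[X] → WithTop Λ) : Prop := ValLE μ ν ∧ μ ≠ ν

/-- ν-equivalence: `f ∼_ν g` iff `ν (f - g) > ν f`. -/
def VEquiv (ν : K[X] → WithTop Λ) (f g : K[X]) : Prop := ν f < ν (f - g)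

/-- ν-divisibility: `h ∣_ν g` iff `g ∼_ν q * h` for some `q`. -/
def VDvd (ν : K[X] → WithTop Λ) (h g : K[X]) : Prop := ∃ q : K[X], VEquiv ν g (q * h)

/-- MacLane–Vaquié key polynomial: monic, ν-minimal and ν-irreducible. -/
def IsMLVKey (ν : K[X] → WithTop Λ) (φ : K[X]) : Prop :=
  φ.Monic ∧ (∀ f : K[X], f ≠ 0 → f.natDegree < φ.natDegree → ¬ VDvd ν φ f) ∧
    ¬ VDvd ν φ 1 ∧ ∀ f g : K[X], VDvd ν φ (f * g) → VDvd ν φ f ∨ VDvd ν φ g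

/-- `e` is the value `ε(f) = max_{b ≥ 1} (ν f - ν (∂_b f)) / b`; phrased multiplicatively,
`e` satisfies `ν f ≤ ν (∂_b f) + b • e` for all `b ≥ 1`, with equality for some `b ≥ 1`.
If `ν f = ∞` then `ε(f) = ∞`. -/
def IsEps (ν : K[X] → WithTop Λ) (f : K[X]) (e : WithTop Λ) : Prop :=
  (ν f = ⊤ ∧ e = ⊤) ∨
    (ν f ≠ ⊤ ∧ (∀ b : ℕ, 1 ≤ b → ν f ≤ ν (hasseDeriv b f) + b • e) ∧
      ∃ b : ℕ, 1 ≤ b ∧ ν f = ν (hasseDeriv b f) + b • e)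

/-- The invariant `ε(f)`; well defined (for non-constant `f`) since `Λ` is divisible and
the defining property determines `e` uniquely. -/
noncomputable def eps (ν : K[X] → WithTop Λ) (f : K[X]) : WithTop Λ :=
  letI := Classical.propDecidable (∃ e : WithTop Λ, IsEps ν f e)
  if h : ∃ e : WithTop Λ, IsEps ν f e then h.choose else ⊤

/-- The set `I(f)` of indices `b ≥ 1` with `ν (∂_b f) = ν f - b • ε(f)`. -/
def epsAttain (ν : K[X] → WithTop Λ) (f : K[X]) : Set ℕ :=
  {b : ℕ | 1 ≤ b ∧ ν f = ν (hasseDeriv b f) + b • eps ν f}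

/-- Abstract key polynomial for `ν`. -/
def IsKeyPoly (ν : K[X] → WithTop Λ) (Q : K[X]) : Prop :=
  Q.Monic ∧ 0 < Q.natDegree ∧
    ∀ f : K[X], 0 < f.natDegree → f.natDegree < Q.natDegree → eps ν f < eps ν Q

/-- The `s`-th coefficient of the canonical `Q`-expansion `f = Σ_s a_s Q^s`,
`deg a_s < deg Q`. -/
noncomputable def qCoeff (Q f : K[X]) (s : ℕ) : K[X] := ((· /ₘ Q)^[s] f) %ₘ Q

/-- The truncation `ν_Q (f) = min_s ν (a_s Q^s)`. -/
noncomputable def trunc (ν : K[X] → WithTop Λ) (Q f : K[X]) : WithTop Λ :=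
  (Finset.range (f.natDegree + 1)).inf fun s => ν (qCoeff Q f s * Q ^ s)

/-- `S_{ν,Q}(f)`: the set of indices attaining the minimum in `ν_Q(f)`. -/
def attain (ν : K[X] → WithTop Λ) (Q f : K[X]) : Set ℕ :=
  {s : ℕ | ν (qCoeff Q f s * Q ^ s) = trunc ν Q f}

/-- The augmented valuation `[μ; φ, γ] (f) = min_s (μ (a_s) + s • γ)` on φ-expansions. -/
noncomputable def augVal (μ : K[X] → WithTop Λ) (φ : K[X]) (γ : WithTop Λ) (f : K[X]) :
    WithTop Λ :=
  (Finset.range (f.natDegree + 1)).inf fun s => μ (qCoeff φ f s) + s • γ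

/-- `Φ_{μ,ν}`: monic polynomials of minimal degree with `μ φ < ν φ`. -/
def PhiSet (μ ν : K[X] → WithTop Λ) : Set K[X] :=
  {φ : K[X] | φ.Monic ∧ μ φ < ν φ ∧
    ∀ ψ : K[X], ψ.Monic → μ ψ < ν ψ → φ.natDegree ≤ ψ.natDegree}

/-- `mult f`: the least `b ≥ 1` with `∂_b f ≠ 0`. -/
noncomputable def multOf (f : K[X]) : ℕ := sInf {b : ℕ | 1 ≤ b ∧ hasseDeriv b f ≠ 0}

/-- Abstract limit key polynomial for `ν` (conditions (K1)-(K4)). -/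
def IsLimitKeyPoly (ν : K[X] → WithTop Λ) (Q : K[X]) : Prop :=
  Q.Monic ∧
    ∃ Qm : K[X], IsKeyPoly ν Qm ∧ ValLT (trunc ν Qm) ν ∧
      (∃ χ ∈ PhiSet (trunc ν Qm) ν, Qm.natDegree = χ.natDegree) ∧
      (∀ χ ∈ PhiSet (trunc ν Qm) ν, ∃ χ' ∈ PhiSet (trunc ν Qm) ν, ν χ < ν χ') ∧
      (∀ χ ∈ PhiSet (trunc ν Qm) ν, trunc ν χ Q < ν Q) ∧
      ∀ Q' : K[X], Q'.Monic →
        (∀ χ ∈ PhiSet (trunc ν Qm) ν, trunc ν χ Q' < ν Q') → Q.natDegree ≤ Q'.natDegree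

/-- A continuous MacLane chain of stable degree `m`: valuations `ρ_0 < ρ_1 < ⋯`,
monic key polynomials `χ_i` (for `i ≥ 1`) of degree `m`, with
`ρ_i = [ρ_{i-1}; χ_i, β_i]`, `β_i = ρ_i (χ_i) > ρ_{i-1} (χ_i)` and
`χ_{i+1} ∤_{ρ_i} χ_i`. -/
structure MacLaneChain (K : Type*) [Field K] (Λ : Type*) [AddCommGroup Λ] [LinearOrder Λ] [IsOrderedAddMonoid Λ] where
  m : ℕ
  hm : 0 < m
  ρ : ℕ → K[X] → WithTop Λ
  χ : ℕ → K[X]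
  β : ℕ → Λ
  isVal : ∀ i : ℕ, IsValuation (ρ i)
  mono : ∀ i : ℕ, ValLT (ρ i) (ρ (i + 1))
  monicChi : ∀ i : ℕ, (χ (i + 1)).Monic
  degChi : ∀ i : ℕ, (χ (i + 1)).natDegree = m
  keyChi : ∀ i : ℕ, IsMLVKey (ρ i) (χ (i + 1))
  beta_def : ∀ i : ℕ, ρ (i + 1) (χ (i + 1)) = (β (i + 1) : WithTop Λ)
  beta_lt : ∀ i : ℕ, ρ i (χ (i + 1)) < (β (i + 1) : WithTop Λ)
  aug : ∀ i : ℕ, ρ (i + 1) = augVal (ρ i) (χ (i + 1)) (β (i + 1) : WithTop Λ)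
  not_dvd : ∀ i : ℕ, ¬ VDvd (ρ (i + 1)) (χ (i + 2)) (χ (i + 1))

/-- A polynomial is stable w.r.t. the chain if its values `ρ_i f` are eventually constant. -/
def MacLaneChain.Stable (ch : MacLaneChain K Λ) (f : K[X]) : Prop :=
  ∃ i0 : ℕ, ∀ i : ℕ, i0 ≤ i → ch.ρ i f = ch.ρ i0 f

/-- The chain is essential: non-stable polynomials exist and all have degree `> m`. -/
def MacLaneChain.Essential (ch : MacLaneChain K Λ) : Prop :=
  (∃ f : K[X], ¬ ch.Stable f) ∧ ∀ f : K[X], ¬ ch.Stable f → ch.m < f.natDegree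

/-- MLV limit key polynomials of the chain: monic non-stable polynomials of minimal
degree `m_∞`. -/
def MacLaneChain.IsLimKP (ch : MacLaneChain K Λ) (φ : K[X]) : Prop :=
  φ.Monic ∧ ¬ ch.Stable φ ∧ ∀ f : K[X], ¬ ch.Stable f → φ.natDegree ≤ f.natDegree

/-- Convex subgroup of a linearly ordered abelian group. -/
def IsConvexSubgroup (H : AddSubgroup Λ) : Prop :=
  ∀ x y : Λ, 0 < x → x < y → y ∈ H → x ∈ H

/-- The value group of a valuation: the subgroup of `Λ` generated by the finite values. -/
def valueGroup {F : Type*} [Field F] (ρ : F[X] → WithTop Λ) : AddSubgroup Λ :=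
  AddSubgroup.closure {γ : Λ | ∃ f : F[X], ρ f = (γ : WithTop Λ)}


variable [Module ℚ Λ]


section Stmt10Helpers

variable {ν : K[X] → WithTop Λ}

lemma wt_coe_nsmul (n : ℕ) (x : Λ) : ((n • x : Λ) : WithTop Λ) = n • (x : WithTop Λ) := by
  induction n with
  | zero => simp
  | succ k ih => rw [succ_nsmul, succ_nsmul, WithTop.coe_add, ih]

lemma wt_nsmul_top {n : ℕ} (hn : 1 ≤ n) : n • (⊤ : WithTop Λ) = ⊤ := by
  obtain ⟨k, rfl⟩ := Nat.exists_eq_add_of_le hn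
  rw [add_nsmul, one_nsmul, top_add]

lemma wt_nsmul_mono {x y : WithTop Λ} (h : x ≤ y) (n : ℕ) : n • x ≤ n • y := by
  induction n with
  | zero => simp
  | succ k ih => rw [succ_nsmul, succ_nsmul]; exact add_le_add ih h

lemma lam_nsmul_mono {x y : Λ} (h : x ≤ y) (n : ℕ) : n • x ≤ n • y := by
  induction n with
  | zero => simp
  | succ k ih => rw [succ_nsmul, succ_nsmul]; exact add_le_add ih h

lemma lam_nsmul_strict {x y : Λ} (h : x < y) {n : ℕ} (hn : 1 ≤ n) : n • x < n • y := by
  induction n with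
  | zero => omega
  | succ k ih =>
    rcases Nat.eq_zero_or_pos k with rfl | hk
    · simpa using h
    · rw [succ_nsmul, succ_nsmul]; exact add_lt_add (ih hk) h

lemma wt_add_lt_add {x y z w : WithTop Λ} (hxz : x ≤ z) (hyw : y < w) (hxy : x + y ≠ ⊤) :
    x + y < z + w := by
  rcases WithTop.add_ne_top.mp hxy with ⟨hx, hy⟩
  rcases eq_or_ne z ⊤ with rfl | hz
  · rw [top_add]; exact hxy.lt_top
  rcases eq_or_ne w ⊤ with rfl | hw
  · rw [add_top]; exact hxy.lt_top
  lift x to Λ using hx; lift y to Λ using hy; lift z to Λ using hz; lift w to Λ using hw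
  rw [← WithTop.coe_add, ← WithTop.coe_add, WithTop.coe_lt_coe]
  exact add_lt_add_of_le_of_lt (WithTop.coe_le_coe.mp hxz) (WithTop.coe_lt_coe.mp hyw)

lemma wt_add_lt_add' {x y z w : WithTop Λ} (hxz : x < z) (hyw : y ≤ w) (hxy : x + y ≠ ⊤) :
    x + y < z + w := by
  rw [add_comm x y, add_comm z w]
  exact wt_add_lt_add hyw hxz (by rwa [add_comm])

lemma rearr (x y : WithTop Λ) (i j : ℕ) (c : WithTop Λ) :
    (x + i • c) + (y + j • c) = (x + y) + (i + j) • c := by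
  rw [add_nsmul, add_add_add_comm]

lemma val_one (hν : IsValuation ν) : ν 1 = 0 := by
  have h := hν.2.1 1 1
  rw [mul_one] at h
  have h1 : ν 1 ≠ ⊤ := by
    have := hν.2.2.2 1 one_ne_zero
    rwa [Polynomial.C_1] at this
  lift (ν 1) to Λ using h1 with γ hγ
  rw [← WithTop.coe_add, WithTop.coe_eq_coe] at h
  have : γ = 0 := by
    have := add_left_cancel (a := γ) (b := 0) (c := γ) (by rw [add_zero, ← h])
    exact this.symm
  exact_mod_cast this

lemma val_neg (hν : IsValuation ν) (f : K[X]) : ν (-f) = ν f := by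
  have hm : (-1 : K[X]) * (-1 : K[X]) = 1 := by ring
  have h := hν.2.1 (-1) (-1)
  rw [hm, val_one hν] at h
  have h1 : ν (-1 : K[X]) ≠ ⊤ := by
    have := hν.2.2.2 (-1) (by norm_num)
    rwa [map_neg, Polynomial.C_1] at this
  lift (ν (-1 : K[X])) to Λ using h1 with γ hγ
  rw [← WithTop.coe_add] at h
  have hγ0 : γ = 0 := by
    have h2 : γ + γ = 0 := by exact_mod_cast h.symm
    rcases lt_trichotomy γ 0 with hlt | he | hgt
    · have h3 : γ + γ < 0 := by simpa using add_lt_add hlt hlt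
      rw [h2] at h3
      exact absurd h3 (lt_irrefl _)
    · exact he
    · have h3 : (0:Λ) < γ + γ := by simpa using add_lt_add hgt hgt
      rw [h2] at h3
      exact absurd h3 (lt_irrefl _)
  have := hν.2.1 (-1) f
  rw [neg_one_mul] at this
  rw [this, ← hγ, hγ0]
  simp

lemma val_sub_min (hν : IsValuation ν) (f g : K[X]) : min (ν f) (ν g) ≤ ν (f - g) := by
  rw [sub_eq_add_neg, ← val_neg hν g]
  exact hν.2.2.1 f (-g)

lemma val_add_eq_left (hν : IsValuation ν) {f g : K[X]} (h : ν f < ν g) :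
    ν (f + g) = ν f := by
  refine le_antisymm ?_ ?_
  · by_contra hc
    push_neg at hc
    have h2 : ν f < min (ν (f + g)) (ν g) := lt_min hc h
    have h3 : min (ν (f + g)) (ν g) ≤ ν ((f + g) - g) := val_sub_min hν _ _
    rw [add_sub_cancel_right] at h3
    exact absurd (h2.trans_le h3) (lt_irrefl _)
  · calc ν f = min (ν f) (ν g) := (min_eq_left h.le).symm
      _ ≤ ν (f + g) := hν.2.2.1 f g

lemma val_sum_le_add (hν : IsValuation ν) {ι : Type*} {S : Finset ι} {t : ι → K[X]}
    {x c : WithTop Λ} (h : ∀ j ∈ S, x ≤ ν (t j) + c) : x ≤ ν (∑ j ∈ S, t j) + c := by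
  classical
  induction S using Finset.induction with
  | empty => rw [Finset.sum_empty, hν.1, top_add]; exact le_top
  | @insert a s ha ih =>
    rw [Finset.sum_insert ha]
    have hmin : min (ν (t a)) (ν (∑ j ∈ s, t j)) ≤ ν (t a + ∑ j ∈ s, t j) := hν.2.2.1 _ _
    rcases le_total (ν (t a)) (ν (∑ j ∈ s, t j)) with hh | hh
    · exact (h a (Finset.mem_insert_self a s)).trans
        (add_le_add_left ((min_eq_left hh ▸ hmin : ν (t a) ≤ _)) c)
    · exact (ih (fun j hj => h j (Finset.mem_insert_of_mem hj))).trans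
        (add_le_add_left ((min_eq_right hh ▸ hmin : ν (∑ j ∈ s, t j) ≤ _)) c)

lemma val_sum_lt_add (hν : IsValuation ν) {ι : Type*} {S : Finset ι} {t : ι → K[X]}
    {x c : WithTop Λ} (hx : x ≠ ⊤) (h : ∀ j ∈ S, x < ν (t j) + c) :
    x < ν (∑ j ∈ S, t j) + c := by
  classical
  induction S using Finset.induction with
  | empty => rw [Finset.sum_empty, hν.1, top_add]; exact hx.lt_top
  | @insert a s ha ih =>
    rw [Finset.sum_insert ha]
    have hmin : min (ν (t a)) (ν (∑ j ∈ s, t j)) ≤ ν (t a + ∑ j ∈ s, t j) := hν.2.2.1 _ _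
    rcases le_total (ν (t a)) (ν (∑ j ∈ s, t j)) with hh | hh
    · exact (h a (Finset.mem_insert_self a s)).trans_le
        (add_le_add_left ((min_eq_left hh ▸ hmin : ν (t a) ≤ _)) c)
    · exact (ih (fun j hj => h j (Finset.mem_insert_of_mem hj))).trans_le
        (add_le_add_left ((min_eq_right hh ▸ hmin : ν (∑ j ∈ s, t j) ≤ _)) c)

lemma val_sum_lt (hν : IsValuation ν) {ι : Type*} {S : Finset ι} {t : ι → K[X]}
    {x : WithTop Λ} (hx : x ≠ ⊤) (h : ∀ j ∈ S, x < ν (t j)) :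
    x < ν (∑ j ∈ S, t j) := by
  have := val_sum_lt_add hν (c := 0) hx (fun j hj => by simpa using h j hj)
  rwa [add_zero] at this

lemma val_sum_le (hν : IsValuation ν) {ι : Type*} {S : Finset ι} {t : ι → K[X]}
    {x : WithTop Λ} (h : ∀ j ∈ S, x ≤ ν (t j)) : x ≤ ν (∑ j ∈ S, t j) := by
  have := val_sum_le_add hν (c := 0) (fun j hj => by simpa using h j hj)
  rwa [add_zero] at this

lemma val_sum_dom (hν : IsValuation ν) {ι : Type*} {S : Finset ι} {t : ι → K[X]}
    {j₀ : ι} (hj : j₀ ∈ S) (hfin : ν (t j₀) ≠ ⊤)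
    (hdom : ∀ j ∈ S, j ≠ j₀ → ν (t j₀) < ν (t j)) :
    ν (∑ j ∈ S, t j) = ν (t j₀) := by
  classical
  rw [← Finset.add_sum_erase S t hj]
  refine val_add_eq_left hν ?_
  refine val_sum_lt hν hfin ?_
  intro j hjmem
  exact hdom j (Finset.mem_of_mem_erase hjmem) (Finset.ne_of_mem_erase hjmem)

lemma hd_eq_zero_of_lt {f : K[X]} {b : ℕ} (h : f.natDegree < b) : hasseDeriv b f = 0 := by
  ext n
  rw [hasseDeriv_coeff, coeff_eq_zero_of_natDegree_lt (lt_of_lt_of_le h (Nat.le_add_left b n)),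
    mul_zero, coeff_zero]

lemma hd_natDegree_ne_zero {f : K[X]} (hf : f ≠ 0) : hasseDeriv f.natDegree f ≠ 0 := by
  intro h
  have h0 := congrArg (fun p => Polynomial.coeff p 0) h
  simp only [hasseDeriv_coeff, zero_add, Nat.choose_self, Nat.cast_one, one_mul,
    coeff_zero] at h0
  exact hf (Polynomial.leadingCoeff_eq_zero.mp h0)

lemma eps_spec_of_exists {f : K[X]} (hex : ∃ e : WithTop Λ, IsEps ν f e) :
    IsEps ν f (eps ν f) := by
  have h1 : eps ν f = hex.choose := by
    unfold eps
    exact dif_pos hex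
  rw [h1]
  exact hex.choose_spec

lemma untop'_spec {x : WithTop Λ} (h : x ≠ ⊤) : x = ((x.untopD 0 : Λ) : WithTop Λ) := by
  lift x to Λ using h
  simp

lemma exists_expansion {a : K[X]} (ha : a.Monic) (hd : 0 < a.natDegree) (f : K[X]) :
    ∃ (S : ℕ) (c : ℕ → K[X]), f = ∑ s ∈ Finset.range (S+1), c s * a ^ s ∧
      ∀ s, (c s).natDegree < a.natDegree := by
  suffices H : ∀ n : ℕ, ∀ f : K[X], f.natDegree ≤ n →
      ∃ (S : ℕ) (c : ℕ → K[X]), f = ∑ s ∈ Finset.range (S+1), c s * a ^ s ∧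
        ∀ s, (c s).natDegree < a.natDegree by
    exact H f.natDegree f le_rfl
  intro n
  induction n using Nat.strong_induction_on with
  | _ n ih =>
    intro f hfn
    by_cases hcase : f.natDegree < a.natDegree
    · refine ⟨0, fun _ => f, ?_, fun _ => hcase⟩
      simp
    · push_neg at hcase
      set q := f /ₘ a with hq
      have hfdpos : 0 < f.natDegree := lt_of_lt_of_le hd hcase
      have hqdeg : q.natDegree < f.natDegree := by
        rw [hq, natDegree_divByMonic f ha]
        omega
      obtain ⟨S, c, hsum, hdeg⟩ := ih q.natDegree (lt_of_lt_of_le hqdeg hfn) q le_rfl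
      refine ⟨S+1, fun s => Nat.casesOn s (f %ₘ a) (fun s' => c s'), ?_, ?_⟩
      · rw [Finset.sum_range_succ']
        simp only [pow_zero, mul_one]
        have : ∑ i ∈ Finset.range (S+1), (fun s => Nat.casesOn s (f %ₘ a) (fun s' => c s'))
            (i+1) * a ^ (i+1) = (∑ s ∈ Finset.range (S+1), c s * a ^ s) * a := by
          rw [Finset.sum_mul]
          refine Finset.sum_congr rfl ?_
          intro i _
          simp [pow_succ, mul_assoc]
        rw [this, ← hsum]
        have h2 := modByMonic_add_div f a
        have h3 : a * (f /ₘ a) + f %ₘ a = f := by rw [add_comm]; exact h2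
        show f = q * a + f %ₘ a
        rw [mul_comm q a, hq, h3]
      · intro s
        cases s with
        | zero =>
          simp only []
          by_cases h0 : f %ₘ a = 0
          · rw [h0]; simpa using hd
          · exact natDegree_lt_natDegree h0 (degree_modByMonic_lt f ha)
        | succ s' => exact hdeg s'

lemma mul_allB (hν : IsValuation ν) {u v : K[X]} {e : Λ}
    (hu : ∀ i : ℕ, ν u ≤ ν (hasseDeriv i u) + i • ((e : Λ) : WithTop Λ))
    (hv : ∀ i : ℕ, ν v ≤ ν (hasseDeriv i v) + i • ((e : Λ) : WithTop Λ)) :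
    ∀ i : ℕ, ν (u * v) ≤ ν (hasseDeriv i (u * v)) + i • ((e : Λ) : WithTop Λ) := by
  intro i
  rw [hν.2.1 u v, hasseDeriv_mul]
  refine val_sum_le_add hν ?_
  intro p hp
  have hpi := Finset.HasAntidiagonal.mem_antidiagonal.mp hp
  rw [hν.2.1]
  calc ν u + ν v ≤ (ν (hasseDeriv p.1 u) + p.1 • ((e : Λ) : WithTop Λ))
        + (ν (hasseDeriv p.2 v) + p.2 • ((e : Λ) : WithTop Λ)) := add_le_add (hu p.1) (hv p.2)
    _ = (ν (hasseDeriv p.1 u) + ν (hasseDeriv p.2 v)) + (p.1 + p.2) • ((e : Λ) : WithTop Λ) :=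
        rearr _ _ _ _ _
    _ = ν (hasseDeriv p.1 u) + ν (hasseDeriv p.2 v) + i • ((e : Λ) : WithTop Λ) := by rw [hpi]

lemma prod_pack (hν : IsValuation ν) {u v : K[X]} {e : Λ} {ju jv : ℕ}
    (hu0 : ν u ≠ ⊤) (hv0 : ν v ≠ ⊤)
    (hu1 : ∀ i : ℕ, ν u ≤ ν (hasseDeriv i u) + i • ((e : Λ) : WithTop Λ))
    (hu2 : ν u = ν (hasseDeriv ju u) + ju • ((e : Λ) : WithTop Λ))
    (hu3 : ∀ i : ℕ, ju < i → ν u < ν (hasseDeriv i u) + i • ((e : Λ) : WithTop Λ))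
    (hv1 : ∀ i : ℕ, ν v ≤ ν (hasseDeriv i v) + i • ((e : Λ) : WithTop Λ))
    (hv2 : ν v = ν (hasseDeriv jv v) + jv • ((e : Λ) : WithTop Λ))
    (hv3 : ∀ i : ℕ, jv < i → ν v < ν (hasseDeriv i v) + i • ((e : Λ) : WithTop Λ)) :
    (ν (u*v) = ν (hasseDeriv (ju+jv) (u*v)) + (ju+jv) • ((e : Λ) : WithTop Λ)) ∧
    (∀ i : ℕ, ju + jv < i → ν (u*v) < ν (hasseDeriv i (u*v)) + i • ((e : Λ) : WithTop Λ)) := by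
  have huv : ν (u * v) ≠ ⊤ := by
    rw [hν.2.1]; exact WithTop.add_ne_top.mpr ⟨hu0, hv0⟩
  have hterm_lt : ∀ i : ℕ, ∀ p : ℕ × ℕ, p.1 + p.2 = i → (ju < p.1 ∨ jv < p.2) →
      ν (u*v) < ν (hasseDeriv p.1 u * hasseDeriv p.2 v) + i • ((e : Λ) : WithTop Λ) := by
    intro i p hpi hor
    rw [hν.2.1 u v, hν.2.1 (hasseDeriv p.1 u)]
    have hrw : ν (hasseDeriv p.1 u) + ν (hasseDeriv p.2 v) + i • ((e : Λ) : WithTop Λ)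
        = (ν (hasseDeriv p.1 u) + p.1 • ((e : Λ) : WithTop Λ))
          + (ν (hasseDeriv p.2 v) + p.2 • ((e : Λ) : WithTop Λ)) := by
      rw [rearr, hpi]
    rw [hrw]
    have hne : ν u + ν v ≠ ⊤ := WithTop.add_ne_top.mpr ⟨hu0, hv0⟩
    rcases hor with h | h
    · exact wt_add_lt_add' (hu3 p.1 h) (hv1 p.2) hne
    · exact wt_add_lt_add (hu1 p.1) (hv3 p.2 h) hne
  constructor
  · rw [hasseDeriv_mul]
    have hmem : (ju, jv) ∈ Finset.HasAntidiagonal.antidiagonal (ju + jv) := by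
      simp [Finset.HasAntidiagonal.mem_antidiagonal]
    have hXeq : ν (u*v) = (ν (hasseDeriv ju u) + ν (hasseDeriv jv v))
        + (ju + jv) • ((e : Λ) : WithTop Λ) := by
      rw [hν.2.1 u v, hu2, hv2, rearr]
    have hXne : ν (hasseDeriv ju u) + ν (hasseDeriv jv v) ≠ ⊤ := by
      intro h
      rw [h, top_add] at hXeq
      exact huv hXeq
    have hsmul_ne : ((ju + jv) • ((e : Λ) : WithTop Λ)) ≠ ⊤ := by
      rw [← wt_coe_nsmul]; exact WithTop.coe_ne_top
    have hdomm : ∀ p ∈ Finset.HasAntidiagonal.antidiagonal (ju + jv), p ≠ (ju, jv) →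
        ν (hasseDeriv ju u * hasseDeriv jv v) < ν (hasseDeriv p.1 u * hasseDeriv p.2 v) := by
      intro p hp hpne
      have hpi := Finset.HasAntidiagonal.mem_antidiagonal.mp hp
      have hor : ju < p.1 ∨ jv < p.2 := by
        rcases Nat.lt_or_ge ju p.1 with h | h
        · exact Or.inl h
        rcases Nat.lt_or_ge jv p.2 with h' | h'
        · exact Or.inr h'
        exfalso
        apply hpne
        have : p.1 = ju ∧ p.2 = jv := by omega
        exact Prod.ext this.1 this.2
      have h1 := hterm_lt (ju+jv) p hpi hor
      rw [hXeq] at h1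
      rw [hν.2.1 (hasseDeriv ju u)]
      exact (WithTop.add_lt_add_iff_right hsmul_ne).mp h1
    have hfin : ν (hasseDeriv ju u * hasseDeriv jv v) ≠ ⊤ := by
      rw [hν.2.1]; exact hXne
    have := val_sum_dom hν (t := fun p : ℕ × ℕ => hasseDeriv p.1 u * hasseDeriv p.2 v)
      hmem hfin hdomm
    rw [this, hν.2.1 (hasseDeriv ju u), ← hXeq]
  · intro i hi
    rw [hasseDeriv_mul]
    refine val_sum_lt_add hν huv ?_
    intro p hp
    have hpi := Finset.HasAntidiagonal.mem_antidiagonal.mp hp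
    exact hterm_lt i p hpi (by omega)

lemma exists_isEps (hν : IsValuation ν) (hdom : ∀ g : K[X], g ≠ 0 → ν g ≠ ⊤)
    {f : K[X]} (hf : 0 < f.natDegree) : ∃ e : Λ, IsEps ν f (e : WithTop Λ) := by
  classical
  have hf0 : f ≠ 0 := fun h => by simp [h] at hf
  set n := f.natDegree with hn
  set T : Finset ℕ := (Finset.range (n+1)).filter (fun b => 1 ≤ b ∧ hasseDeriv b f ≠ 0)
    with hT
  have hnT : n ∈ T := by
    refine Finset.mem_filter.mpr ⟨Finset.self_mem_range_succ n, hf, ?_⟩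
    exact hd_natDegree_ne_zero hf0
  have hTne : T.Nonempty := ⟨n, hnT⟩
  set vf : Λ := (ν f).untopD 0 with hvfdef
  have hvf : ν f = (vf : WithTop Λ) := untop'_spec (hdom f hf0)
  set vd : ℕ → Λ := fun b => (ν (hasseDeriv b f)).untopD 0 with hvd
  have hvdb : ∀ b ∈ T, ν (hasseDeriv b f) = ((vd b : Λ) : WithTop Λ) := by
    intro b hb
    exact untop'_spec (hdom _ (Finset.mem_filter.mp hb).2.2)
  set r : ℕ → Λ := fun b => (b : ℚ)⁻¹ • (vf - vd b) with hr
  set e : Λ := T.sup' hTne r with he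
  have hbr : ∀ b ∈ T, (b : ℕ) • r b = vf - vd b := by
    intro b hb
    have hb1 : 1 ≤ b := (Finset.mem_filter.mp hb).2.1
    have hbq : ((b : ℕ) : ℚ) ≠ 0 := Nat.cast_ne_zero.mpr (by omega)
    rw [hr]
    rw [← Nat.cast_smul_eq_nsmul ℚ, smul_smul, mul_inv_cancel₀ hbq, one_smul]
  have hkey : ∀ b ∈ T, ν f ≤ ν (hasseDeriv b f) + b • ((e : Λ) : WithTop Λ) := by
    intro b hb
    rw [hvf, hvdb b hb, ← wt_coe_nsmul, ← WithTop.coe_add, WithTop.coe_le_coe]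
    have h1 : r b ≤ e := Finset.le_sup' r hb
    have h2 : vf - vd b ≤ b • e := by
      rw [← hbr b hb]; exact lam_nsmul_mono h1 b
    have := sub_le_iff_le_add.mp h2
    rwa [add_comm] at this
  refine ⟨e, Or.inr ⟨hdom f hf0, ?_, ?_⟩⟩
  · intro b hb1
    by_cases hdz : hasseDeriv b f = 0
    · rw [hdz, hν.1, top_add]; exact le_top
    · have hble : b ≤ n := by
        by_contra hc
        push_neg at hc
        exact hdz (hd_eq_zero_of_lt (by omega))
      exact hkey b (Finset.mem_filter.mpr ⟨Finset.mem_range.mpr (by omega), hb1, hdz⟩)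
  · obtain ⟨b0, hb0, hsup⟩ := Finset.exists_mem_eq_sup' hTne r
    refine ⟨b0, (Finset.mem_filter.mp hb0).2.1, ?_⟩
    rw [hvf, hvdb b0 hb0, ← wt_coe_nsmul, ← WithTop.coe_add, WithTop.coe_eq_coe]
    have h2 : (b0 : ℕ) • e = vf - vd b0 := by rw [he, hsup]; exact hbr b0 hb0
    rw [h2, add_sub_cancel]


set_option maxHeartbeats 1000000 in
lemma main_bound (hν : IsValuation ν) (hdom : ∀ g : K[X], g ≠ 0 → ν g ≠ ⊤)
    {φ : K[X]} (hφ : IsMLVKey ν φ) (hφdeg : 0 < φ.natDegree) {EΛ : Λ}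
    (hE1 : ∀ b : ℕ, 1 ≤ b → ν φ ≤ ν (hasseDeriv b φ) + b • ((EΛ : Λ) : WithTop Λ)) :
    ∀ f : K[X], f ≠ 0 → ∀ b : ℕ, 1 ≤ b →
      ν f ≤ ν (hasseDeriv b f) + b • ((EΛ : Λ) : WithTop Λ) := by
  suffices H : ∀ n : ℕ, ∀ f : K[X], f.natDegree ≤ n → f ≠ 0 → ∀ b : ℕ, 1 ≤ b →
      ν f ≤ ν (hasseDeriv b f) + b • ((EΛ : Λ) : WithTop Λ) by
    exact fun f hf b hb => H f.natDegree f le_rfl hf b hb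
  intro n
  induction n using Nat.strong_induction_on with
  | _ n ih =>
  intro f hfn hf0 b hb
  by_cases hconst : f.natDegree = 0
  · rw [hd_eq_zero_of_lt (by omega), hν.1, top_add]; exact le_top
  by_cases hbig : φ.natDegree ≤ f.natDegree
  · -- division step
    set q := f /ₘ φ with hqdef
    set r := f %ₘ φ with hrdef
    have hfeq : r + φ * q = f := modByMonic_add_div f φ
    have hrd : r.natDegree < φ.natDegree := by
      by_cases h0 : r = 0
      · rw [h0]; simpa using hφdeg
      · exact natDegree_lt_natDegree h0 (degree_modByMonic_lt f hφ.1)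
    have hq0 : q ≠ 0 := by
      intro h
      rw [h, mul_zero, add_zero] at hfeq
      rw [hfeq] at hrd
      omega
    have hqdeg : q.natDegree < f.natDegree := by
      rw [hqdef, natDegree_divByMonic f hφ.1]; omega
    have hboth : ν f ≤ ν r ∧ ν f ≤ ν (φ * q) := by
      rcases lt_trichotomy (ν r) (ν (φ * q)) with hlt | heq | hgt
      · have hh : ν f = ν r := by rw [← hfeq]; exact val_add_eq_left hν hlt
        exact ⟨hh.le, hh.le.trans hlt.le⟩
      · by_cases hle : ν f ≤ ν r
        · exact ⟨hle, heq ▸ hle⟩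
        · push_neg at hle
          exfalso
          have hr0 : r ≠ 0 := by
            intro h
            rw [h, hν.1] at hle
            exact absurd hle (not_lt.mpr le_top)
          refine hφ.2.1 r hr0 hrd ⟨-q, ?_⟩
          show ν r < ν (r - -q * φ)
          have hfr : r - -q * φ = f := by rw [← hfeq]; ring
          rwa [hfr]
      · have hh : ν f = ν (φ * q) := by
          rw [← hfeq, add_comm]; exact val_add_eq_left hν hgt
        exact ⟨hh.le.trans hgt.le, hh.le⟩
    have hbr : ν f ≤ ν (hasseDeriv b r) + b • ((EΛ : Λ) : WithTop Λ) := by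
      by_cases hr0 : r = 0
      · rw [hr0, map_zero, hν.1, top_add]; exact le_top
      · exact hboth.1.trans (ih r.natDegree (by omega) r le_rfl hr0 b hb)
    have hbφq : ν f ≤ ν (hasseDeriv b (φ * q)) + b • ((EΛ : Λ) : WithTop Λ) := by
      refine hboth.2.trans (mul_allB hν ?_ ?_ b)
      · intro i
        cases i with
        | zero => simp [hasseDeriv_zero']
        | succ i' => exact hE1 (i'+1) (by omega)
      · intro i
        cases i with
        | zero => simp [hasseDeriv_zero']
        | succ i' => exact ih q.natDegree (by omega) q le_rfl hq0 (i'+1) (by omega)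
    have hsplit : hasseDeriv b f = hasseDeriv b r + hasseDeriv b (φ * q) := by
      rw [← hfeq, map_add]
    rcases le_total (ν (hasseDeriv b r)) (ν (hasseDeriv b (φ * q))) with hh | hh
    · refine hbr.trans (add_le_add_left ?_ _)
      rw [hsplit]
      have hm := hν.2.2.1 (hasseDeriv b r) (hasseDeriv b (φ * q))
      rwa [min_eq_left hh] at hm
    · refine hbφq.trans (add_le_add_left ?_ _)
      rw [hsplit]
      have hm := hν.2.2.1 (hasseDeriv b r) (hasseDeriv b (φ * q))
      rwa [min_eq_right hh] at hm
  · -- small case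
    push_neg at hbig
    by_contra hcon
    push_neg at hcon
    -- hcon : ν (hasseDeriv b f) + b • E' < ν f
    set cK := f.leadingCoeff⁻¹ with hcK
    have hlc : f.leadingCoeff ≠ 0 := leadingCoeff_ne_zero.mpr hf0
    have hcK0 : cK ≠ 0 := inv_ne_zero hlc
    set a := f * C cK with ha
    have hamonic : a.Monic := monic_mul_leadingCoeff_inv hf0
    have hadeg : a.natDegree = f.natDegree :=
      natDegree_eq_of_degree_eq (degree_mul_leadingCoeff_inv f hf0)
    have ha0 : a ≠ 0 := hamonic.ne_zero
    have hνCc : ν (C cK) ≠ ⊤ := hν.2.2.2 cK hcK0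
    have hνa : ν a = ν f + ν (C cK) := hν.2.1 f (C cK)
    have hda : ∀ i : ℕ, hasseDeriv i a = hasseDeriv i f * C cK := by
      intro i
      rw [ha, mul_comm f (C cK), ← smul_eq_C_mul, map_smul, smul_eq_C_mul, mul_comm]
    have hνda : ∀ i : ℕ, ν (hasseDeriv i a) = ν (hasseDeriv i f) + ν (C cK) := by
      intro i; rw [hda i, hν.2.1]
    have hcona : ν (hasseDeriv b a) + b • ((EΛ : Λ) : WithTop Λ) < ν a := by
      rw [hνa, hνda]
      have hre : ν (hasseDeriv b f) + ν (C cK) + b • ((EΛ : Λ) : WithTop Λ)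
          = (ν (hasseDeriv b f) + b • ((EΛ : Λ) : WithTop Λ)) + ν (C cK) := by
        rw [add_right_comm]
      rw [hre]
      exact (WithTop.add_lt_add_iff_right hνCc).mpr hcon
    have hadegpos : 0 < a.natDegree := by omega
    obtain ⟨eΛ, hE_a⟩ := exists_isEps hν hdom hadegpos
    rcases hE_a with ⟨hatop, _⟩ | ⟨hνa_ne, ha1, ba, hba1, hbaeq⟩
    · exact absurd hatop (hdom a ha0)
    -- E < e
    have hEe : EΛ < eΛ := by
      have h1 : ν (hasseDeriv b a) + b • ((EΛ : Λ) : WithTop Λ)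
          < ν (hasseDeriv b a) + b • ((eΛ : Λ) : WithTop Λ) :=
        lt_of_lt_of_le hcona (ha1 b hb)
      have hxne : ν (hasseDeriv b a) ≠ ⊤ := by
        intro h; rw [h, top_add] at h1; exact absurd h1 (not_lt.mpr le_top)
      have h2 := (WithTop.add_lt_add_iff_left hxne).mp h1
      rw [← wt_coe_nsmul, ← wt_coe_nsmul, WithTop.coe_lt_coe] at h2
      by_contra hc
      push_neg at hc
      exact absurd h2 (not_lt.mpr (lam_nsmul_mono hc b))
    -- bmax
    set I' : Finset ℕ := (Finset.range (a.natDegree + 1)).filter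
      (fun i => 1 ≤ i ∧ ν a = ν (hasseDeriv i a) + i • ((eΛ : Λ) : WithTop Λ)) with hI'
    have hbaI : ba ∈ I' := by
      refine Finset.mem_filter.mpr ⟨Finset.mem_range.mpr ?_, hba1, hbaeq⟩
      by_contra hc; push_neg at hc
      rw [hd_eq_zero_of_lt (by omega), hν.1, top_add] at hbaeq
      exact hνa_ne hbaeq
    have hIne : I'.Nonempty := ⟨ba, hbaI⟩
    set bm := I'.max' hIne with hbm
    have hbmI : bm ∈ I' := I'.max'_mem hIne
    have hbm1 : 1 ≤ bm := (Finset.mem_filter.mp hbmI).2.1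
    have hbmeq : ν a = ν (hasseDeriv bm a) + bm • ((eΛ : Λ) : WithTop Λ) :=
      (Finset.mem_filter.mp hbmI).2.2
    have ha3 : ∀ i : ℕ, bm < i → ν a < ν (hasseDeriv i a) + i • ((eΛ : Λ) : WithTop Λ) := by
      intro i hi
      have h1 : 1 ≤ i := by omega
      refine lt_of_le_of_ne (ha1 i h1) ?_
      intro heq
      by_cases hir : i ≤ a.natDegree
      · have hiI : i ∈ I' := Finset.mem_filter.mpr ⟨Finset.mem_range.mpr (by omega), h1, heq⟩
        have := I'.le_max' i hiI
        omega
      · rw [hd_eq_zero_of_lt (by omega), hν.1, top_add] at heq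
        exact hνa_ne heq
    have ha1' : ∀ i : ℕ, ν a ≤ ν (hasseDeriv i a) + i • ((eΛ : Λ) : WithTop Λ) := by
      intro i
      cases i with
      | zero => simp [hasseDeriv_zero']
      | succ i' => exact ha1 _ (by omega)
    -- powers package
    have hpow : ∀ s : ℕ,
        (∀ i : ℕ, ν (a^s) ≤ ν (hasseDeriv i (a^s)) + i • ((eΛ : Λ) : WithTop Λ))
        ∧ ν (a^s) = ν (hasseDeriv (s*bm) (a^s)) + (s*bm) • ((eΛ : Λ) : WithTop Λ)
        ∧ ∀ i : ℕ, s*bm < i → ν (a^s) < ν (hasseDeriv i (a^s)) + i • ((eΛ : Λ) : WithTop Λ) := by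
      intro s
      induction s with
      | zero =>
        have h1 : (a:K[X])^0 = 1 := pow_zero a
        refine ⟨?_, ?_, ?_⟩
        · intro i
          cases i with
          | zero => simp [hasseDeriv_zero']
          | succ i' =>
            rw [h1, hd_eq_zero_of_lt (by simp [natDegree_one]), hν.1, top_add]
            exact le_top
        · simp [h1, hasseDeriv_zero']
        · intro i hi
          rw [h1, hd_eq_zero_of_lt (by simpa [natDegree_one] using hi), hν.1, top_add]
          exact (hdom 1 one_ne_zero).lt_top
      | succ s ihs =>
        have hpowne : ν (a^s) ≠ ⊤ := hdom _ (pow_ne_zero s ha0)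
        have hp := prod_pack hν hpowne (hdom a ha0) ihs.1 ihs.2.1 ihs.2.2 ha1' hbmeq ha3
        have hmulrw : (s+1)*bm = s*bm + bm := by ring
        refine ⟨?_, ?_, ?_⟩
        · intro i
          rw [pow_succ]
          exact mul_allB hν ihs.1 ha1' i
        · rw [pow_succ, hmulrw]
          exact hp.1
        · intro i hi
          rw [pow_succ]
          exact hp.2 i (by omega)
    -- expansion of φ
    obtain ⟨S, cc, hφsum, hccdeg⟩ := exists_expansion hamonic hadegpos φ
    have hφ0 : φ ≠ 0 := hφ.1.ne_zero
    have hνφ_ne : ν φ ≠ ⊤ := hdom φ hφ0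
    -- piece packages
    have hc_all : ∀ s : ℕ, cc s ≠ 0 →
        (∀ i : ℕ, ν (cc s) ≤ ν (hasseDeriv i (cc s)) + i • ((eΛ : Λ) : WithTop Λ))
        ∧ (∀ i : ℕ, 0 < i → ν (cc s) < ν (hasseDeriv i (cc s)) + i • ((eΛ : Λ) : WithTop Λ)) := by
      intro s hcs0
      have hcsE : ∀ i : ℕ, 1 ≤ i →
          ν (cc s) ≤ ν (hasseDeriv i (cc s)) + i • ((EΛ : Λ) : WithTop Λ) := by
        intro i hi
        refine ih ((cc s).natDegree) ?_ (cc s) le_rfl hcs0 i hi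
        have := hccdeg s
        omega
      constructor
      · intro i
        cases i with
        | zero => simp [hasseDeriv_zero']
        | succ i' =>
          refine (hcsE _ (by omega)).trans (add_le_add_right ?_ _)
          exact wt_nsmul_mono (WithTop.coe_le_coe.mpr hEe.le) _
      · intro i hi
        by_cases hz : hasseDeriv i (cc s) = 0
        · rw [hz, hν.1, top_add]; exact (hdom _ hcs0).lt_top
        · refine lt_of_le_of_lt (hcsE i (by omega)) ?_
          refine (WithTop.add_lt_add_iff_left (hdom _ hz)).mpr ?_
          rw [← wt_coe_nsmul, ← wt_coe_nsmul, WithTop.coe_lt_coe]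
          exact lam_nsmul_strict hEe (by omega)
    have hpiece : ∀ s : ℕ, cc s ≠ 0 →
        (∀ i : ℕ, ν (cc s * a^s) ≤ ν (hasseDeriv i (cc s * a^s)) + i • ((eΛ : Λ) : WithTop Λ))
        ∧ (ν (cc s * a^s) = ν (hasseDeriv (s*bm) (cc s * a^s)) + (s*bm) • ((eΛ : Λ) : WithTop Λ))
        ∧ (∀ i : ℕ, s*bm < i →
            ν (cc s * a^s) < ν (hasseDeriv i (cc s * a^s)) + i • ((eΛ : Λ) : WithTop Λ)) := by
      intro s hcs0
      obtain ⟨hc1, hc3⟩ := hc_all s hcs0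
      have hc2 : ν (cc s) = ν (hasseDeriv 0 (cc s)) + 0 • ((eΛ : Λ) : WithTop Λ) := by
        simp [hasseDeriv_zero']
      have hp := prod_pack hν (hdom _ hcs0) (hdom _ (pow_ne_zero s ha0)) hc1 hc2
        (fun i hi => hc3 i hi) (hpow s).1 (hpow s).2.1 (hpow s).2.2
      refine ⟨mul_allB hν hc1 (hpow s).1, ?_, ?_⟩
      · have h0 := hp.1
        rwa [zero_add] at h0
      · intro i hi
        exact hp.2 i (by omega)
    -- min and attaining max
    set T := Finset.range (S+1) with hT
    set V : ℕ → WithTop Λ := fun s => ν (cc s * a^s) with hV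
    set w := T.inf V with hw
    have hwle : ∀ s ∈ T, w ≤ V s := fun s hs => Finset.inf_le hs
    have hwφ : w ≤ ν φ := by
      rw [hφsum]
      exact val_sum_le hν (fun s hs => hwle s hs)
    have hwne : w ≠ ⊤ := by
      intro h
      rw [h] at hwφ
      exact hνφ_ne (le_antisymm le_top (le_top.trans hwφ))
    set A := T.filter (fun s => V s = w) with hA
    have hAne : A.Nonempty := by
      obtain ⟨s1, hs1, hs1e⟩ := Finset.exists_mem_eq_inf T ⟨0, by simp [hT]⟩ V
      exact ⟨s1, Finset.mem_filter.mpr ⟨hs1, hs1e.symm⟩⟩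
    set s₀ := A.max' hAne with hs₀
    have hs₀A : s₀ ∈ A := A.max'_mem hAne
    have hs₀T : s₀ ∈ T := (Finset.mem_filter.mp hs₀A).1
    have hVs₀ : V s₀ = w := (Finset.mem_filter.mp hs₀A).2
    by_cases hs₀0 : s₀ = 0
    · -- contradiction with ν-minimality of φ
      have hVc : ν (cc 0) = w := by
        have h1 : V 0 = ν (cc 0) := by simp [hV]
        rw [← h1, ← hs₀0, hVs₀]
      have hc00 : cc 0 ≠ 0 := by
        intro h
        rw [h, hν.1] at hVc
        exact hwne hVc.symm
      have hstrict : ∀ s ∈ T, s ≠ 0 → w < V s := by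
        intro s hs hsne
        refine lt_of_le_of_ne (hwle s hs) ?_
        intro heq
        have hsA : s ∈ A := Finset.mem_filter.mpr ⟨hs, heq.symm⟩
        have := A.le_max' s hsA
        omega
      have h0T : (0:ℕ) ∈ T := by simp [hT]
      have hφsub : φ - cc 0 = ∑ s ∈ T.erase 0, cc s * a^s := by
        rw [hφsum, ← Finset.add_sum_erase T _ h0T]
        simp
      have hν_big : w < ν (φ - cc 0) := by
        rw [hφsub]
        exact val_sum_lt hν hwne
          (fun s hs => hstrict s (Finset.mem_of_mem_erase hs) (Finset.ne_of_mem_erase hs))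
      have hVDvd : VDvd ν φ (cc 0) := by
        refine ⟨1, ?_⟩
        show ν (cc 0) < ν (cc 0 - 1 * φ)
        have h1 : cc 0 - 1 * φ = -(φ - cc 0) := by ring
        rw [h1, val_neg hν, hVc]
        exact hν_big
      refine hφ.2.1 (cc 0) hc00 ?_ hVDvd
      have := hccdeg 0
      omega
    · -- s₀ ≥ 1 : contradiction with hE1
      have hs₀1 : 1 ≤ s₀ := by omega
      set B := s₀ * bm with hB
      have hB1 : 1 ≤ B := by
        have := Nat.mul_le_mul hs₀1 hbm1
        omega
      have hcs₀ : cc s₀ ≠ 0 := by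
        intro h
        have hVt : V s₀ = ⊤ := by simp [hV, h, hν.1]
        rw [hVs₀] at hVt
        exact hwne hVt
      obtain ⟨hp1, hp2, hp3⟩ := hpiece s₀ hcs₀
      set X := ν (hasseDeriv B (cc s₀ * a^s₀)) with hX
      have hwX : w = X + B • ((eΛ : Λ) : WithTop Λ) := by
        rw [← hVs₀]; exact hp2
      have hXneT : X ≠ ⊤ := by
        intro h; rw [h, top_add] at hwX; exact hwne hwX
      have hBe_ne : (B • ((eΛ : Λ) : WithTop Λ)) ≠ ⊤ := by
        rw [← wt_coe_nsmul]; exact WithTop.coe_ne_top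
      have hdomm : ∀ s ∈ T, s ≠ s₀ → X < ν (hasseDeriv B (cc s * a^s)) := by
        intro s hs hsne
        by_cases hcs : cc s = 0
        · rw [hcs, zero_mul, map_zero, hν.1]; exact hXneT.lt_top
        · by_cases hsA : V s = w
          · have hslt : s < s₀ := by
              have := A.le_max' s (Finset.mem_filter.mpr ⟨hs, hsA⟩)
              omega
            have hsltB : s * bm < B := by
              rw [hB]
              exact Nat.mul_lt_mul_of_lt_of_le hslt le_rfl (by omega)
            have h2 := (hpiece s hcs).2.2 B hsltB
            rw [show ν (cc s * a ^ s) = V s from rfl, hsA, hwX] at h2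
            exact (WithTop.add_lt_add_iff_right hBe_ne).mp h2
          · have hlt : w < V s := lt_of_le_of_ne (hwle s hs) (fun h => hsA h.symm)
            have h2 := lt_of_lt_of_le hlt ((hpiece s hcs).1 B)
            rw [hwX] at h2
            exact (WithTop.add_lt_add_iff_right hBe_ne).mp h2
      have hhdφ : ν (hasseDeriv B φ) = X := by
        have hsplit : hasseDeriv B φ = ∑ s ∈ T, hasseDeriv B (cc s * a^s) := by
          rw [hφsum, map_sum]
        rw [hsplit]
        exact val_sum_dom hν (t := fun s => hasseDeriv B (cc s * a^s)) hs₀T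
          (by rw [← hX]; exact hXneT) hdomm
      have hfinal := hE1 B hB1
      rw [hhdφ] at hfinal
      have hlt2 : X + B • ((EΛ : Λ) : WithTop Λ) < X + B • ((eΛ : Λ) : WithTop Λ) := by
        refine (WithTop.add_lt_add_iff_left hXneT).mpr ?_
        rw [← wt_coe_nsmul, ← wt_coe_nsmul, WithTop.coe_lt_coe]
        exact lam_nsmul_strict hEe hB1
      have hcontra : ν φ < ν φ := lt_of_le_of_lt hfinal (lt_of_lt_of_le (hwX ▸ hlt2) hwφ)
      exact absurd hcontra (lt_irrefl _)

end Stmt10Helpers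

/-- if `φ ∈ KP(ν)` has minimal degree, then `ε(φ) ≥ ε(f)` for all
non-constant `f`. -/
theorem stmt10 (ν : K[X] → WithTop Λ) (hν : IsValuation ν)
    (φ : K[X]) (hφ : IsMLVKey ν φ)
    (hmin : ∀ ψ : K[X], IsMLVKey ν ψ → φ.natDegree ≤ ψ.natDegree) :
    ∀ f : K[X], 0 < f.natDegree → eps ν f ≤ eps ν φ := by
  intro f hf
  have hφ0 : φ ≠ 0 := hφ.1.ne_zero
  have hφdeg : 0 < φ.natDegree := by
    by_contra hc
    push_neg at hc
    have hφ1 : φ = 1 := by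
      have h0 : φ.natDegree = 0 := by omega
      exact hφ.1.natDegree_eq_zero.mp h0
    refine hφ.2.2.1 ⟨1, ?_⟩
    show ν 1 < ν ((1:K[X]) - 1 * φ)
    rw [hφ1, one_mul, sub_self, hν.1, val_one hν]
    exact WithTop.coe_lt_top 0
  by_cases hdom : ∀ g : K[X], g ≠ 0 → ν g ≠ ⊤
  · -- main case
    obtain ⟨E₀, hE₀⟩ := exists_isEps hν hdom hφdeg
    have hEspec := eps_spec_of_exists (f := φ) ⟨_, hE₀⟩
    rcases hEspec with ⟨ht, _⟩ | ⟨hνφne, hE1, bφ, hbφ1, hbφeq⟩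
    · exact absurd ht (hdom φ hφ0)
    have hEne : eps ν φ ≠ ⊤ := by
      intro h
      rw [h, wt_nsmul_top hbφ1, add_top] at hbφeq
      exact hνφne hbφeq
    lift eps ν φ to Λ using hEne with EΛ hEΛ
    obtain ⟨e₀, he₀⟩ := exists_isEps hν hdom hf
    have hfspec := eps_spec_of_exists (f := f) ⟨_, he₀⟩
    have hf0 : f ≠ 0 := by intro h; rw [h] at hf; simp at hf
    rcases hfspec with ⟨ht, _⟩ | ⟨hνfne, _, bf, hbf1, hbfeq⟩
    · exact absurd ht (hdom f hf0)
    have h2 := main_bound hν hdom hφ hφdeg (EΛ := EΛ) hE1 f hf0 bf hbf1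
    rw [hbfeq] at h2
    have hhdne : ν (hasseDeriv bf f) ≠ ⊤ := by
      intro h
      rw [h, top_add] at hbfeq
      exact hνfne hbfeq
    have h4 : bf • eps ν f ≤ bf • ((EΛ : Λ) : WithTop Λ) :=
      (WithTop.add_le_add_iff_left hhdne).mp h2
    by_contra hc
    push_neg at hc
    rcases eq_or_ne (eps ν f) ⊤ with he | he
    · rw [he, wt_nsmul_top hbf1] at h4
      rw [← wt_coe_nsmul] at h4
      exact (WithTop.coe_ne_top) (le_antisymm le_top (le_top.trans h4))
    · lift eps ν f to Λ using he with eₗ heₗ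
      rw [← wt_coe_nsmul, ← wt_coe_nsmul, WithTop.coe_le_coe] at h4
      rw [WithTop.coe_lt_coe] at hc
      exact absurd h4 (not_le.mpr (lam_nsmul_strict hc hbf1))
  · -- support case : ν φ = ⊤ and eps ν φ = ⊤
    push_neg at hdom
    obtain ⟨g, hg0, hgtop⟩ := hdom
    have hφtop : ν φ = ⊤ := by
      by_contra hφt
      classical
      have hexn : ∃ n : ℕ, ∃ p : K[X], p ≠ 0 ∧ ν p = ⊤ ∧ p.natDegree = n :=
        ⟨g.natDegree, g, hg0, hgtop, rfl⟩
      obtain ⟨p, hp0, hptop, hpn⟩ := Nat.find_spec hexn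
      have hminp : ∀ h : K[X], h ≠ 0 → ν h = ⊤ → Nat.find hexn ≤ h.natDegree :=
        fun h h0 ht => Nat.find_min' hexn ⟨h, h0, ht, rfl⟩
      set gd := EuclideanDomain.gcd φ p with hgd
      have hgdφ : gd ∣ φ := EuclideanDomain.gcd_dvd_left φ p
      have hgdp : gd ∣ p := EuclideanDomain.gcd_dvd_right φ p
      have hgd0 : gd ≠ 0 := by
        intro h
        rw [hgd] at h
        exact hp0 (EuclideanDomain.gcd_eq_zero_iff.mp h).2
      obtain ⟨hh, hpeq⟩ := hgdp
      have hh0 : hh ≠ 0 := by intro h; rw [h, mul_zero] at hpeq; exact hp0 hpeq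
      have hsum : ν gd + ν hh = ⊤ := by rw [← hν.2.1, ← hpeq, hptop]
      rcases WithTop.add_eq_top.mp hsum with hgt | hht
      · obtain ⟨k, hk⟩ := hgdφ
        exact hφt (by rw [hk, hν.2.1, hgt, top_add])
      · have hnd : p.natDegree = gd.natDegree + hh.natDegree := by
          rw [hpeq]; exact natDegree_mul hgd0 hh0
        have hge := hminp hh hh0 hht
        have hgdd : gd.natDegree = 0 := by omega
        obtain ⟨γ, hγ⟩ := natDegree_eq_zero.mp hgdd
        have hγ0 : γ ≠ 0 := by intro h; rw [h, C_0] at hγ; exact hgd0 hγ.symm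
        have hbez := EuclideanDomain.gcd_eq_gcd_ab φ p
        refine hφ.2.2.1 ⟨C γ⁻¹ * EuclideanDomain.gcdA φ p, ?_⟩
        show ν 1 < ν ((1:K[X]) - C γ⁻¹ * EuclideanDomain.gcdA φ p * φ)
        have h2 : C γ⁻¹ * gd = 1 := by
          rw [← hγ, ← C_mul, inv_mul_cancel₀ hγ0, C_1]
        have h1 : (1:K[X]) - C γ⁻¹ * EuclideanDomain.gcdA φ p * φ
            = C γ⁻¹ * EuclideanDomain.gcdB φ p * p := by
          have h3 : C γ⁻¹ * (φ * EuclideanDomain.gcdA φ p + p * EuclideanDomain.gcdB φ p)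
              = 1 := by rw [← hbez, ← hgd]; exact h2
          linear_combination -h3
        rw [h1, val_one hν, hν.2.1, hptop, add_top]
        exact WithTop.coe_lt_top 0
    have hexφ : ∃ e : WithTop Λ, IsEps ν φ e := ⟨⊤, Or.inl ⟨hφtop, rfl⟩⟩
    have hspec := eps_spec_of_exists hexφ
    rcases hspec with ⟨_, h⟩ | ⟨hne, _⟩
    · rw [h]; exact le_top
    · exact absurd hφtop hne

end KeyPolPaper
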